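/- There exist two deque-sortable permutations π and σ of length 7 agreeing on their first three entries such that no single placement strategy for the first three elements allows both to be sorted: specifically, for π = 7526431 and σ = 7524163, any deque state reached after pushing 7, 5, 2 (up to left-right reflection the deque is either 2,5,7 or 5,7,2) permits a successful completion for exactly one of π, σ but not the other. -/

import Mathlib

/-- State of a deque switchyard: output so far, the deque, remaining input. -/
structure DState where
  output : List ℕ
  deque : List ℕ
  input : List ℕ

/-- One step of deque sorting: push the next input element to either end of the
deque, or pop either end element of the deque to the output. -/
inductive DequeStep : DState → DState → Prop
  | pushLeft (o d i : List ℕ) (x : ℕ) : DequeStep ⟨o, d, x :: i⟩ ⟨o, x :: d, i⟩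
  | pushRight (o d i : List ℕ) (x : ℕ) : DequeStep ⟨o, d, x :: i⟩ ⟨o, d ++ [x], i⟩
  | popLeft (o d i : List ℕ) (x : ℕ) : DequeStep ⟨o, x :: d, i⟩ ⟨o ++ [x], d, i⟩
  | popRight (o d i : List ℕ) (x : ℕ) : DequeStep ⟨o, d ++ [x], i⟩ ⟨o ++ [x], d, i⟩

/-- A permutation (as a list) is deque-sortable if some run outputs `1, 2, …, n`. -/
def DequeSortable (l : List ℕ) : Prop :=
  Relation.ReflTransGen DequeStep ⟨[], [], l⟩ ⟨List.range' 1 l.length, [], []⟩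

/-- A push-only step: the next input element is moved to either end of the deque. -/
inductive PushStep : DState → DState → Prop
  | pushLeft (o d i : List ℕ) (x : ℕ) : PushStep ⟨o, d, x :: i⟩ ⟨o, x :: d, i⟩
  | pushRight (o d i : List ℕ) (x : ℕ) : PushStep ⟨o, d, x :: i⟩ ⟨o, d ++ [x], i⟩

/-- From deque `d` with remaining input `rest`, one can complete a successful sort
of a permutation of `{1,…,7}`. -/
def CanComplete (d rest : List ℕ) : Prop :=
  Relation.ReflTransGen DequeStep ⟨[], d, rest⟩ ⟨List.range' 1 7, [], []⟩

instance : DecidableEq DState := fun a b =>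
  decidable_of_iff (a.output = b.output ∧ a.deque = b.deque ∧ a.input = b.input)
    (by cases a; cases b; simp)

namespace OnlineDeque

def nexts : DState → List DState
  | ⟨o, d, i⟩ =>
    (match i with
      | [] => []
      | x :: i' => [⟨o, x :: d, i'⟩, ⟨o, d ++ [x], i'⟩])
    ++
    (match d with
      | [] => []
      | x :: d' => [⟨o ++ [x], d', i⟩])
    ++
    (match d.reverse with
      | [] => []
      | x :: r => [⟨o ++ [x], r.reverse, i⟩])

theorem step_iff_mem (s t : DState) : DequeStep s t ↔ t ∈ nexts s := by
  constructor
  · intro h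
    cases h with
    | pushLeft o d i x => simp [nexts]
    | pushRight o d i x => simp [nexts]
    | popLeft o d i x => simp [nexts]
    | popRight o d i x =>
      simp only [nexts, List.mem_append]
      refine Or.inr ?_
      rw [show (d ++ [x]).reverse = x :: d.reverse by simp]
      simp
  · intro h
    obtain ⟨o, d, i⟩ := s
    simp only [nexts, List.mem_append] at h
    rcases h with (h | h) | h
    · match i, h with
      | x :: i', h =>
        simp only [List.mem_cons, List.mem_singleton] at h
        rcases h with rfl | rfl | h
        · exact DequeStep.pushLeft o d i' x
        · exact DequeStep.pushRight o d i' x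
        · exact absurd h List.not_mem_nil
    · match d, h with
      | x :: d', h =>
        simp only [List.mem_singleton] at h
        subst h
        exact DequeStep.popLeft o d' i x
    · revert h
      match hd : d.reverse with
      | [] => intro h; exact absurd h List.not_mem_nil
      | x :: r =>
        intro h
        simp only [List.mem_singleton] at h
        subst h
        have : d = r.reverse ++ [x] := by
          have := congrArg List.reverse hd
          simpa using this
        rw [this]
        exact DequeStep.popRight o r.reverse i x

def measure (s : DState) : ℕ := 2 * s.input.length + s.deque.length

theorem step_measure {s t : DState} (h : DequeStep s t) : measure s = measure t + 1 := by
  cases h <;> simp [measure] <;> omega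

theorem step_output {s t : DState} (h : DequeStep s t) : s.output <+: t.output := by
  cases h <;> simp

theorem rtg_output {s t : DState} (h : Relation.ReflTransGen DequeStep s t) :
    s.output <+: t.output := by
  induction h with
  | refl => exact List.prefix_refl _
  | tail _ h ih => exact ih.trans (step_output h)

def goal : DState := ⟨List.range' 1 7, [], []⟩

def good (s : DState) : Bool := s.output.isPrefixOf (List.range' 1 7)

def reach : ℕ → DState → List DState
  | 0, s => [s]
  | n+1, s => ((nexts s).filter good).flatMap (reach n)

theorem forward : ∀ n (s : DState), measure s = n →
    Relation.ReflTransGen DequeStep s goal → goal ∈ reach n s := by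
  intro n
  induction n with
  | zero =>
    intro s hm h
    rcases Relation.ReflTransGen.cases_head h with rfl | ⟨t, hst, _⟩
    · simp [reach]
    · have := step_measure hst; omega
  | succ n ih =>
    intro s hm h
    rcases Relation.ReflTransGen.cases_head h with rfl | ⟨t, hst, htg⟩
    · simp [measure, goal] at hm
    · have hmt : measure t = n := by have := step_measure hst; omega
      have hgood : good t = true := by
        have := rtg_output htg
        simp only [goal] at this
        simpa [good, List.isPrefixOf_iff_prefix] using this
      have hmem : t ∈ (nexts s).filter good :=
        List.mem_filter.mpr ⟨(step_iff_mem s t).mp hst, hgood⟩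
      exact List.mem_flatMap.mpr ⟨t, hmem, ih t hmt htg⟩

theorem backward : ∀ n (s : DState), goal ∈ reach n s →
    Relation.ReflTransGen DequeStep s goal := by
  intro n
  induction n with
  | zero => intro s h; simp [reach] at h; subst h; rfl
  | succ n ih =>
    intro s h
    obtain ⟨t, ht, hg⟩ := List.mem_flatMap.mp h
    have hst : DequeStep s t := (step_iff_mem s t).mpr (List.mem_filter.mp ht).1
    exact Relation.ReflTransGen.head hst (ih t hg)

theorem canComplete_iff (d rest : List ℕ) :
    CanComplete d rest ↔ goal ∈ reach (2 * rest.length + d.length) ⟨[], d, rest⟩ :=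
  ⟨fun h => forward _ _ rfl h, backward _ _⟩

/-! Push-only search -/

def pnexts : DState → List DState
  | ⟨o, d, i⟩ =>
    match i with
    | [] => []
    | x :: i' => [⟨o, x :: d, i'⟩, ⟨o, d ++ [x], i'⟩]

theorem pstep_mem {s t : DState} (h : PushStep s t) : t ∈ pnexts s := by
  cases h <;> simp [pnexts]

theorem pstep_len {s t : DState} (h : PushStep s t) :
    s.input.length = t.input.length + 1 := by
  cases h <;> simp

theorem prtg_len {s t : DState} (h : Relation.ReflTransGen PushStep s t) :
    t.input.length ≤ s.input.length := by
  induction h with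
  | refl => exact le_refl _
  | tail _ h ih => have := pstep_len h; omega

def preach : ℕ → DState → List DState
  | 0, s => [s]
  | n+1, s => (pnexts s).flatMap (preach n)

theorem pforward : ∀ n (s t : DState), s.input.length = n + t.input.length →
    Relation.ReflTransGen PushStep s t → t ∈ preach n s := by
  intro n
  induction n with
  | zero =>
    intro s t hl h
    rcases Relation.ReflTransGen.cases_head h with rfl | ⟨u, hsu, hut⟩
    · simp [preach]
    · have h1 := pstep_len hsu
      have h2 := prtg_len hut
      omega
  | succ n ih =>
    intro s t hl h
    rcases Relation.ReflTransGen.cases_head h with rfl | ⟨u, hsu, hut⟩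
    · omega
    · have h1 := pstep_len hsu
      exact List.mem_flatMap.mpr ⟨u, pstep_mem hsu, ih u t (by omega) hut⟩

end OnlineDeque

/-- The permutations π = 7526431 and σ = 7524163 are both deque-sortable and agree on
their first three entries, yet every deque state reachable by pushing 7, 5, 2 permits a
successful completion for exactly one of π, σ: no online placement of the first three
elements allows both to be sorted. -/
theorem online_deque_sorting_fails :
    DequeSortable [7, 5, 2, 6, 4, 3, 1] ∧
    DequeSortable [7, 5, 2, 4, 1, 6, 3] ∧
    ∀ d : List ℕ,
      Relation.ReflTransGen PushStep ⟨[], [], [7, 5, 2]⟩ ⟨[], d, []⟩ →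
      Xor' (CanComplete d [6, 4, 3, 1]) (CanComplete d [4, 1, 6, 3]) := by
  refine ⟨OnlineDeque.backward 14 _ (by decide), OnlineDeque.backward 14 _ (by decide), ?_⟩
  intro d h
  have hmem := OnlineDeque.pforward 3 _ _ (by simp) h
  have hd : d ∈ (OnlineDeque.preach 3 ⟨[], [], [7, 5, 2]⟩).map DState.deque :=
    List.mem_map_of_mem (f := DState.deque) hmem
  simp only [OnlineDeque.preach, OnlineDeque.pnexts, List.flatMap_cons, List.flatMap_nil,
    List.map_cons, List.map_nil, List.mem_cons, List.not_mem_nil, or_false,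
    List.append_nil, List.nil_append, List.singleton_append, List.cons_append] at hd
  rcases hd with rfl | rfl | rfl | rfl | rfl | rfl | rfl | rfl <;>
    rw [Xor', OnlineDeque.canComplete_iff, OnlineDeque.canComplete_iff] <;> decide
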